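/- Let K be a number field with ring of integers O_K, ε ∈ O_K^× a unit of infinite order, k > 0, and T a bounded subset of the mixed space E. Suppose there is a β ∈ O_K such that for every ξ ∈ T, either there exists γ ∈ O_K with N(ι(ε)·ξ − ι(β) − ι(γ)) < k, or ι(ε)·ξ − ι(β) ∈ T. Then every k-exceptional point ξ₀ ∈ T satisfies: for every index j with |ι(ε)|_j > 1, the j-th component of ξ₀ equals the j-th component of ι(β) divided by the j-th component of ι(ε) − 1 (equivalently, |ξ₀ − ι(β)/(ι(ε)−1)|_j = 0 at those components). -/

import Mathlib

open NumberField NumberField.InfinitePlace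

private lemma aux_fix {𝕜 : Type*} [NormedField 𝕜] (e b x : 𝕜) (u : ℕ → 𝕜)
    (h0 : u 0 = x) (hrec : ∀ n, u (n + 1) = e * u n - b)
    (he : 1 < ‖e‖) (R : ℝ) (hu : ∀ n, ‖u n‖ ≤ R) : x = b / (e - 1) := by
  have he1 : e - 1 ≠ 0 := by
    intro h
    rw [sub_eq_zero] at h
    rw [h, norm_one] at he
    exact lt_irrefl _ he
  set c : 𝕜 := b / (e - 1) with hc
  have hcb : (e - 1) * c = b := by
    rw [hc]; field_simp
  have key : ∀ n, u n - c = e ^ n * (x - c) := by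
    intro n
    induction n with
    | zero => simp [h0]
    | succ n ih =>
      rw [hrec n]
      have : e * u n - b - c = e * (u n - c) := by
        rw [← hcb]; ring
      rw [this, ih, pow_succ]; ring
  by_contra hne
  have hxc : (0 : ℝ) < ‖x - c‖ := by
    rw [norm_pos_iff, sub_ne_zero]; exact hne
  obtain ⟨n, hn⟩ := pow_unbounded_of_one_lt ((R + ‖c‖) / ‖x - c‖) he
  have h1 : ‖u n - c‖ ≤ R + ‖c‖ := by
    calc ‖u n - c‖ ≤ ‖u n‖ + ‖c‖ := norm_sub_le _ _
    _ ≤ R + ‖c‖ := by linarith [hu n]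
  have h2 : ‖u n - c‖ = ‖e‖ ^ n * ‖x - c‖ := by
    rw [key n, norm_mul, norm_pow]
  rw [div_lt_iff₀ hxc] at hn
  rw [h2] at h1
  linarith

/-- If `T` is a bounded subset of the mixed space, `ε` a unit of infinite order and
`β ∈ O_K` is such that multiplication by `ι ε` followed by translation by `-ι β`
maps every point of `T` either into a `k`-covered region or back into `T`, then
every `k`-exceptional point `ξ₀ ∈ T` agrees with `ι β / (ι ε - 1)` at every
component at which `|ι ε| > 1`. -/
theorem stmt_1 (K : Type*) [Field K] [NumberField K]
    (ε : (𝓞 K)ˣ) (hε : ¬ IsOfFinOrder ε)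
    (k : ℝ) (hk : 0 < k)
    (T : Set (mixedEmbedding.mixedSpace K)) (hT : Bornology.IsBounded T)
    (β : 𝓞 K)
    (hstep : ∀ ξ ∈ T,
      (∃ γ : 𝓞 K, mixedEmbedding.norm
          (mixedEmbedding K (ε : K) * ξ - mixedEmbedding K (β : K)
            - mixedEmbedding K (γ : K)) < k) ∨
      mixedEmbedding K (ε : K) * ξ - mixedEmbedding K (β : K) ∈ T)
    (ξ₀ : mixedEmbedding.mixedSpace K) (hξ₀ : ξ₀ ∈ T)
    (hexc : ∀ γ : 𝓞 K, k ≤ mixedEmbedding.norm (ξ₀ - mixedEmbedding K (γ : K))) :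
    (∀ w : {w : InfinitePlace K // IsReal w},
      1 < |(mixedEmbedding K (ε : K)).1 w| →
        ξ₀.1 w = (mixedEmbedding K (β : K)).1 w / ((mixedEmbedding K (ε : K)).1 w - 1)) ∧
    (∀ w : {w : InfinitePlace K // IsComplex w},
      1 < ‖(mixedEmbedding K (ε : K)).2 w‖ →
        ξ₀.2 w = (mixedEmbedding K (β : K)).2 w / ((mixedEmbedding K (ε : K)).2 w - 1)) := by
  classical
  obtain ⟨Ξ, hΞ0, hΞrec⟩ : ∃ Ξ : ℕ → mixedEmbedding.mixedSpace K, Ξ 0 = ξ₀ ∧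
      ∀ n, Ξ (n + 1) = mixedEmbedding K (ε : K) * Ξ n - mixedEmbedding K (β : K) :=
    ⟨fun n => Nat.rec ξ₀
      (fun _ x => mixedEmbedding K (ε : K) * x - mixedEmbedding K (β : K)) n,
      rfl, fun n => rfl⟩
  have main : ∀ n, (∀ γ : 𝓞 K,
      k ≤ mixedEmbedding.norm (Ξ n - mixedEmbedding K (γ : K))) ∧ Ξ n ∈ T := by
    intro n
    induction n with
    | zero => exact ⟨by simpa [hΞ0] using hexc, by simpa [hΞ0] using hξ₀⟩
    | succ n ih =>
      obtain ⟨ihe, ihm⟩ := ih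
      have hexc' : ∀ γ : 𝓞 K,
          k ≤ mixedEmbedding.norm (Ξ (n + 1) - mixedEmbedding K (γ : K)) := by
        intro γ
        set δ : 𝓞 K := ((ε⁻¹ : (𝓞 K)ˣ) : 𝓞 K) * (β + γ) with hδ
        have hεδ : (ε : 𝓞 K) * δ = β + γ := by
          rw [hδ, ← mul_assoc, Units.mul_inv, one_mul]
        have hεδ' : mixedEmbedding K (ε : K) * mixedEmbedding K (δ : K)
            = mixedEmbedding K (β : K) + mixedEmbedding K (γ : K) := by
          rw [← map_mul, ← map_add]
          congr 1
          have := congrArg (algebraMap (𝓞 K) K) hεδ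
          rw [map_mul, map_add] at this
          exact this
        have heq : Ξ (n + 1) - mixedEmbedding K (γ : K)
            = mixedEmbedding K (ε : K) * (Ξ n - mixedEmbedding K (δ : K)) := by
          rw [hΞrec n, mul_sub, hεδ']
          ring
        rw [heq, map_mul, mixedEmbedding.norm_unit, one_mul]
        exact ihe δ
      refine ⟨hexc', ?_⟩
      rcases hstep (Ξ n) ihm with ⟨γ, hγ⟩ | hmem
      · exfalso
        have : k ≤ mixedEmbedding.norm (mixedEmbedding K (ε : K) * Ξ n
            - mixedEmbedding K (β : K) - mixedEmbedding K (γ : K)) := by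
          have := hexc' γ
          rwa [hΞrec n] at this
        linarith
      · rw [hΞrec n]; exact hmem
  obtain ⟨R, hR⟩ := hT.exists_norm_le
  constructor
  · intro w hw
    refine aux_fix ((mixedEmbedding K (ε : K)).1 w) ((mixedEmbedding K (β : K)).1 w)
      (ξ₀.1 w) (fun n => (Ξ n).1 w)
      (by simp only [hΞ0]) (fun n => ?_) (by rwa [Real.norm_eq_abs]) R (fun n => ?_)
    · show (Ξ (n + 1)).1 w = _
      rw [hΞrec n]
      rfl
    · calc ‖(Ξ n).1 w‖ ≤ ‖(Ξ n).1‖ := norm_le_pi_norm _ w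
      _ ≤ ‖Ξ n‖ := norm_fst_le _
      _ ≤ R := hR _ (main n).2
  · intro w hw
    refine aux_fix ((mixedEmbedding K (ε : K)).2 w) ((mixedEmbedding K (β : K)).2 w)
      (ξ₀.2 w) (fun n => (Ξ n).2 w)
      (by simp only [hΞ0]) (fun n => ?_) hw R (fun n => ?_)
    · show (Ξ (n + 1)).2 w = _
      rw [hΞrec n]
      rfl
    · calc ‖(Ξ n).2 w‖ ≤ ‖(Ξ n).2‖ := norm_le_pi_norm _ w
      _ ≤ ‖Ξ n‖ := norm_snd_le _
      _ ≤ R := hR _ (main n).2
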